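/- arXiv:1510.00531 — 4 statements merged into one kernel-verified Lean document; each statement's English description precedes it below -/
import Mathlib

section
/- Fix an integer d ≥ 2 and reals b > 0 and ν < 0. For a > 0 set A = a b^d/d, Z_a = Σ_{k∈ℕ₀^d} (A^{k₁+⋯+k_d}/(k₁!⋯k_d!))·exp(ν·k₁⋯k_d) (a convergent series), and π_a(k) = (A^{k₁+⋯+k_d}/(k₁!⋯k_d!))·exp(ν·k₁⋯k_d)/Z_a for k ∈ ℕ₀^d. Then the series Σ_{k∈ℕ₀^d} (k₁⋯k_d)·π_a(k) converges for every a > 0 and lim_{a→∞} Σ_{k∈ℕ₀^d} (k₁⋯k_d)·π_a(k) = 0. -/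
open Filter

namespace Stmt2Aux

open Filter Real

lemma tsum_exp_series (x : ℝ) : ∑' n : ℕ, x ^ n / n.factorial = Real.exp x := by
  rw [Real.exp_eq_exp_ℝ, NormedSpace.exp_eq_tsum_div]

lemma pi_prod_sum {d : ℕ} (g : Fin d → ℕ → ℝ) (h0 : ∀ i n, 0 ≤ g i n)
    (hs : ∀ i, Summable (g i)) :
    Summable (fun k : Fin d → ℕ => ∏ i, g i (k i)) ∧
      ∑' k : Fin d → ℕ, ∏ i, g i (k i) = ∏ i, ∑' n, g i n := by
  induction d with
  | zero =>
      have h1 : (fun k : Fin 0 → ℕ => ∏ i, g i (k i)) = fun _ => (1 : ℝ) := by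
        funext k; simp
      have h2 : HasSum (fun k : Fin 0 → ℕ => ∏ i, g i (k i)) 1 := by
        rw [h1]
        have := hasSum_single (f := fun _ : Fin 0 → ℕ => (1:ℝ)) default
          (fun b' hb' => absurd (Subsingleton.elim b' default) hb')
        simpa using this
      exact ⟨h2.summable, by simp [h2.tsum_eq]⟩
  | succ n ih =>
      obtain ⟨ihS, ihT⟩ := ih (fun i => g i.succ) (fun i n => h0 _ n) (fun i => hs _)
      have key : ∀ p : ℕ × (Fin n → ℕ),
          (∏ i, g i (Fin.consEquiv (fun _ => ℕ) p i)) = g 0 p.1 * ∏ i : Fin n, g i.succ (p.2 i) := by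
        rintro ⟨x, k⟩
        simp only [Fin.consEquiv_apply]
        rw [Fin.prod_univ_succ, Fin.cons_zero]
        exact congrArg _ (Finset.prod_congr rfl fun i _ => by rw [Fin.cons_succ])
      have hSprod := Summable.mul_of_nonneg (f := g 0)
          (g := fun k : Fin n → ℕ => ∏ i : Fin n, g i.succ (k i)) (hs 0) ihS
          (fun m => h0 0 m) (fun k => Finset.prod_nonneg fun i _ => h0 _ _)
      constructor
      · rw [← (Fin.consEquiv (fun _ => ℕ)).summable_iff]
        exact hSprod.congr fun p => (key p).symm
      · rw [← (Fin.consEquiv (fun _ => ℕ)).tsum_eq]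
        calc ∑' p : ℕ × (Fin n → ℕ), ∏ i, g i (Fin.consEquiv (fun _ => ℕ) p i)
            = ∑' p : ℕ × (Fin n → ℕ), g 0 p.1 * ∏ i : Fin n, g i.succ (p.2 i) :=
              tsum_congr key
          _ = ∑' m : ℕ, ∑' k : Fin n → ℕ, g 0 m * ∏ i : Fin n, g i.succ (k i) :=
              Summable.tsum_prod' (f := fun p : ℕ × (Fin n → ℕ) => g 0 p.1 * ∏ i : Fin n, g i.succ (p.2 i))
                hSprod (fun m => by simpa using ihS.mul_left (g 0 m))
          _ = ∑' m : ℕ, g 0 m * ∑' k : Fin n → ℕ, ∏ i : Fin n, g i.succ (k i) := by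
              congr 1; funext m; exact tsum_mul_left
          _ = (∑' m : ℕ, g 0 m) * ∑' k : Fin n → ℕ, ∏ i : Fin n, g i.succ (k i) :=
              tsum_mul_right
          _ = ∏ i, ∑' m : ℕ, g i m := by
              rw [ihT, Fin.prod_univ_succ]


noncomputable section

variable {d : ℕ}

/-- The Gibbs weight. -/
def term (ν A : ℝ) (k : Fin d → ℕ) : ℝ :=
  (A ^ (∑ i, k i) / ∏ i, (Nat.factorial (k i) : ℝ)) * Real.exp (ν * ∏ i, (k i : ℝ))

/-- The numerator summand. -/
def fnum (ν A : ℝ) (k : Fin d → ℕ) : ℝ := (∏ i, (k i : ℝ)) * term ν A k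

lemma factProd_pos (k : Fin d → ℕ) : (0:ℝ) < ∏ i, (Nat.factorial (k i) : ℝ) :=
  Finset.prod_pos fun i _ => by exact_mod_cast (k i).factorial_pos

lemma term_nonneg {ν A : ℝ} (hA : 0 ≤ A) (k : Fin d → ℕ) : 0 ≤ term ν A k :=
  mul_nonneg (div_nonneg (pow_nonneg hA _) (factProd_pos k).le) (Real.exp_pos _).le

lemma fnum_nonneg {ν A : ℝ} (hA : 0 ≤ A) (k : Fin d → ℕ) : 0 ≤ fnum ν A k :=
  mul_nonneg (Finset.prod_nonneg fun i _ => Nat.cast_nonneg _) (term_nonneg hA k)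

lemma pow_sum_div (A : ℝ) (k : Fin d → ℕ) :
    A ^ (∑ i, k i) / ∏ i, (Nat.factorial (k i) : ℝ)
      = ∏ i, A ^ (k i) / (Nat.factorial (k i) : ℝ) := by
  rw [Finset.prod_div_distrib, Finset.prod_pow_eq_pow_sum]

/-- `x e^{μx} ≤ 1/((-μ)e)` for `x ≥ 0`, `μ < 0`. -/
lemma mul_exp_le {μ : ℝ} (hμ : μ < 0) {x : ℝ} (hx : 0 ≤ x) :
    x * Real.exp (μ * x) ≤ ((-μ) * Real.exp 1)⁻¹ := by
  have hE : (0:ℝ) < Real.exp (μ * x) := Real.exp_pos _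
  have hc : (0:ℝ) < (-μ) * Real.exp 1 := mul_pos (neg_pos.2 hμ) (Real.exp_pos 1)
  have key : (-μ) * x * Real.exp 1 ≤ (Real.exp (μ * x))⁻¹ := by
    have h1 := Real.add_one_le_exp (-(μ * x) - 1)
    have h2 : -(μ * x) ≤ Real.exp (-(μ * x) - 1) := by linarith
    rw [Real.exp_sub, Real.exp_neg] at h2
    have he1 : (0:ℝ) < Real.exp 1 := Real.exp_pos 1
    calc (-μ) * x * Real.exp 1 = -(μ * x) * Real.exp 1 := by ring
      _ ≤ ((Real.exp (μ * x))⁻¹ / Real.exp 1) * Real.exp 1 :=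
          mul_le_mul_of_nonneg_right h2 he1.le
      _ = (Real.exp (μ * x))⁻¹ := div_mul_cancel₀ _ he1.ne'
  have h3 := mul_le_mul_of_nonneg_right key hE.le
  rw [inv_mul_cancel₀ hE.ne'] at h3
  rw [inv_eq_one_div, le_div_iff₀ hc]
  calc x * Real.exp (μ * x) * ((-μ) * Real.exp 1)
      = (-μ) * x * Real.exp 1 * Real.exp (μ * x) := by ring
    _ ≤ 1 := h3

lemma summable_prodexp {A : ℝ} (hA : 0 ≤ A) :
    Summable (fun k : Fin d → ℕ => ∏ i, A ^ (k i) / ((k i).factorial : ℝ)) :=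
  (pi_prod_sum (fun _ n => A ^ n / n.factorial) (fun _ n => by positivity)
    (fun _ => Real.summable_pow_div_factorial A)).1

lemma summable_term {ν A : ℝ} (hν : ν ≤ 0) (hA : 0 ≤ A) :
    Summable (fun k : Fin d → ℕ => term ν A k) := by
  refine Summable.of_nonneg_of_le (term_nonneg hA) (fun k => ?_) (summable_prodexp hA)
  have hexp : Real.exp (ν * ∏ i, ((k i : ℕ) : ℝ)) ≤ 1 := by
    have h1 : ν * ∏ i, ((k i : ℕ) : ℝ) ≤ 0 :=
      mul_nonpos_of_nonpos_of_nonneg hν (Finset.prod_nonneg fun i _ => Nat.cast_nonneg _)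
    calc Real.exp (ν * ∏ i, ((k i : ℕ) : ℝ)) ≤ Real.exp 0 := Real.exp_le_exp.2 h1
      _ = 1 := Real.exp_zero
  calc term ν A k ≤ (A ^ (∑ i, k i) / ∏ i, (Nat.factorial (k i) : ℝ)) * 1 := by
        unfold term
        exact mul_le_mul_of_nonneg_left hexp (div_nonneg (pow_nonneg hA _) (factProd_pos k).le)
    _ = ∏ i, A ^ (k i) / ((k i).factorial : ℝ) := by rw [mul_one, pow_sum_div]

lemma summable_fnum {ν A : ℝ} (hν : ν < 0) (hA : 0 ≤ A) :
    Summable (fun k : Fin d → ℕ => fnum ν A k) := by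
  refine Summable.of_nonneg_of_le (fnum_nonneg hA) (fun k => ?_)
    ((summable_prodexp hA).mul_left ((-ν) * Real.exp 1)⁻¹)
  have h1 : fnum ν A k = ((∏ i, ((k i : ℕ) : ℝ)) * Real.exp (ν * ∏ i, ((k i : ℕ) : ℝ)))
      * (A ^ (∑ i, k i) / ∏ i, (Nat.factorial (k i) : ℝ)) := by
    unfold fnum term; ring
  rw [h1, ← pow_sum_div]
  exact mul_le_mul_of_nonneg_right
    (mul_exp_le hν (Finset.prod_nonneg fun i _ => Nat.cast_nonneg _))
    (div_nonneg (pow_nonneg hA _) (factProd_pos k).le)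

lemma one_le_Z (hd : 2 ≤ d) {ν A : ℝ} (hν : ν ≤ 0) (hA : 0 ≤ A) :
    (1:ℝ) ≤ ∑' k : Fin d → ℕ, term ν A k := by
  have h0 : term ν A (fun _ : Fin d => (0:ℕ)) = 1 := by
    have hd' : d ≠ 0 := by omega
    simp [term, hd']
  calc (1:ℝ) = term ν A (fun _ : Fin d => (0:ℕ)) := h0.symm
    _ ≤ ∑' k : Fin d → ℕ, term ν A k :=
        Summable.le_tsum (summable_term hν hA) _ (fun j _ => term_nonneg hA j)

lemma exp_le_Z (hd : 2 ≤ d) {ν A : ℝ} (hν : ν ≤ 0) (hA : 0 ≤ A) :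
    Real.exp A ≤ ∑' k : Fin d → ℕ, term ν A k := by
  have hs : Summable (fun n : ℕ => A ^ n / (n.factorial : ℝ)) :=
    Real.summable_pow_div_factorial A
  have hd0 : 0 < d := by omega
  have hd1 : 1 < d := by omega
  set i0 : Fin d := ⟨0, hd0⟩ with hi0
  set i1 : Fin d := ⟨1, hd1⟩ with hi1
  set e : ℕ → (Fin d → ℕ) := fun n i => if i = i0 then n else 0 with he
  have hinj : Function.Injective e := fun a b h => by simpa [e] using congrFun h i0
  have hterm : ∀ n, term ν A (e n) = A ^ n / (n.factorial : ℝ) := by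
    intro n
    have h1 : ∑ i, e n i = n := by simp [e, Finset.sum_ite_eq']
    have hne : i1 ≠ i0 := by simp [Fin.ext_iff, hi0, hi1]
    have h2 : ∏ i, ((e n i : ℕ) : ℝ) = 0 :=
      Finset.prod_eq_zero (Finset.mem_univ i1) (by simp [e, hne])
    have h3 : ∏ i, ((e n i).factorial : ℝ) = (n.factorial : ℝ) := by
      have hh : ∀ i : Fin d, ((e n i).factorial : ℝ) = if i = i0 then (n.factorial : ℝ) else 1 := by
        intro i; by_cases h : i = i0 <;> simp [e, h]
      rw [Finset.prod_congr rfl (fun i _ => hh i), Finset.prod_ite_eq']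
      simp
    unfold term
    rw [h1, h2, h3, mul_zero, Real.exp_zero, mul_one]
  have h := Summable.tsum_le_tsum_of_inj e hinj (fun c _ => term_nonneg hA c)
    (fun n => (hterm n).ge) hs (summable_term hν hA)
  rwa [tsum_exp_series] at h

/-- second majorant (case where all the coordinates interact). -/
def maj2 (x : ℝ) (k : Fin d → ℕ) : ℝ := ∏ i, x ^ (k i) / ((k i).factorial : ℝ)

/-- first majorant (one large coordinate `j`, the rest below `m`). -/
def maj1 (A μ : ℝ) (m : ℕ) (j : Fin d) (k : Fin d → ℕ) : ℝ :=
  (A * Real.exp μ) ^ (k j) / ((k j).factorial : ℝ) *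
    ∏ i ∈ Finset.univ.erase j, (if k i < m then A ^ (k i) / ((k i).factorial : ℝ) else 0)

lemma maj2_nonneg {x : ℝ} (hx : 0 ≤ x) (k : Fin d → ℕ) : 0 ≤ maj2 x k :=
  Finset.prod_nonneg fun i _ => div_nonneg (pow_nonneg hx _) (Nat.cast_nonneg _)

lemma maj1_nonneg {A μ : ℝ} (hA : 0 ≤ A) (m : ℕ) (j : Fin d) (k : Fin d → ℕ) :
    0 ≤ maj1 A μ m j k := by
  unfold maj1
  apply mul_nonneg
  · exact div_nonneg (pow_nonneg (mul_nonneg hA (Real.exp_pos _).le) _) (Nat.cast_nonneg _)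
  · refine Finset.prod_nonneg fun i _ => ?_
    split
    · exact div_nonneg (pow_nonneg hA _) (Nat.cast_nonneg _)
    · exact le_refl 0


/-- The key pointwise domination of the numerator summand. -/
lemma pointwise (hd : 2 ≤ d) {μ A : ℝ} (hμ : μ < 0) (hA : 0 ≤ A) {m : ℕ} (hm : 1 ≤ m)
    (k : Fin d → ℕ) :
    fnum (2*μ) A k ≤ ((-μ) * Real.exp 1)⁻¹ * maj2 (A * Real.exp (μ * m / d)) k
      + ((-μ) * Real.exp 1)⁻¹ * ∑ j, maj1 A μ m j k := by
  have hc : (0:ℝ) ≤ ((-μ) * Real.exp 1)⁻¹ :=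
    inv_nonneg.2 (mul_nonneg (neg_nonneg.2 hμ.le) (Real.exp_pos 1).le)
  have hx2 : 0 ≤ A * Real.exp (μ * m / d) := mul_nonneg hA (Real.exp_pos _).le
  have hmaj2 := maj2_nonneg hx2 k
  have hmaj1 : ∀ j, 0 ≤ maj1 A μ m j k := fun j => maj1_nonneg hA m j k
  have hsum1 : 0 ≤ ∑ j, maj1 A μ m j k := Finset.sum_nonneg fun j _ => hmaj1 j
  by_cases h0 : ∀ i, 1 ≤ k i
  swap
  · push_neg at h0
    obtain ⟨i, hi⟩ := h0
    have hki : k i = 0 := by omega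
    have hzero : ∏ i, ((k i : ℕ) : ℝ) = 0 :=
      Finset.prod_eq_zero (Finset.mem_univ i) (by simp [hki])
    have hf : fnum (2*μ) A k = 0 := by unfold fnum; rw [hzero, zero_mul]
    rw [hf]
    exact add_nonneg (mul_nonneg hc hmaj2) (mul_nonneg hc hsum1)
  have hd0 : 0 < d := by omega
  obtain ⟨j, -, hj⟩ := Finset.exists_max_image (Finset.univ : Finset (Fin d)) k
    ⟨⟨0, hd0⟩, Finset.mem_univ _⟩
  set P : ℕ := ∏ i, k i with hP
  set Q : ℕ := ∏ i ∈ Finset.univ.erase j, k i with hQdef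
  have hPQ : P = k j * Q := by
    rw [hP, hQdef, Finset.mul_prod_erase _ _ (Finset.mem_univ j)]
  have hQ1 : 1 ≤ Q := Finset.one_le_prod' fun i _ => h0 i
  have hcast : ∏ i, ((k i : ℕ) : ℝ) = (P : ℝ) := (Nat.cast_prod _ _).symm
  have hXnn : (0:ℝ) ≤ A ^ (∑ i, k i) / ∏ i, (Nat.factorial (k i) : ℝ) :=
    div_nonneg (pow_nonneg hA _) (factProd_pos k).le
  have key : fnum (2*μ) A k ≤ ((-μ) * Real.exp 1)⁻¹ *
      (Real.exp (μ * P) * (A ^ (∑ i, k i) / ∏ i, (Nat.factorial (k i) : ℝ))) := by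
    have h1 : fnum (2*μ) A k = ((P : ℝ) * Real.exp (μ * P)) *
        (Real.exp (μ * P) * (A ^ (∑ i, k i) / ∏ i, (Nat.factorial (k i) : ℝ))) := by
      unfold fnum term
      rw [hcast, show (2*μ) * (P:ℝ) = μ * P + μ * P by ring, Real.exp_add]
      ring
    rw [h1]
    exact mul_le_mul_of_nonneg_right (mul_exp_le hμ (Nat.cast_nonneg P))
      (mul_nonneg (Real.exp_pos _).le hXnn)
  by_cases hQm : m ≤ Q
  · -- case 2 : all coordinates interact
    have h4 : ∑ i, k i ≤ d * k j := by
      have := Finset.sum_le_card_nsmul Finset.univ k (k j) (fun i _ => hj i (Finset.mem_univ i))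
      simpa [Finset.card_univ, smul_eq_mul] using this
    have hnat : m * (∑ i, k i) ≤ d * P := by
      calc m * (∑ i, k i) ≤ m * (d * k j) := Nat.mul_le_mul_left _ h4
        _ = d * (k j * m) := by ring
        _ ≤ d * (k j * Q) := Nat.mul_le_mul_left _ (Nat.mul_le_mul_left _ hQm)
        _ = d * P := by rw [hPQ]
    have hreal : μ * P ≤ (μ * m / d) * (∑ i, k i) := by
      have hd0' : (0:ℝ) < d := by exact_mod_cast hd0
      rw [div_mul_eq_mul_div, le_div_iff₀ hd0']
      have h5 : (m:ℝ) * ((∑ i, k i : ℕ) : ℝ) ≤ (d:ℝ) * (P:ℝ) := by exact_mod_cast hnat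
      nlinarith [mul_nonneg (neg_nonneg.2 hμ.le) (sub_nonneg.2 h5)]
    have hexple : Real.exp (μ * P) ≤ Real.exp ((μ * m / d) * (∑ i, k i)) :=
      Real.exp_le_exp.2 (by exact_mod_cast hreal)
    have hmaj2eq : maj2 (A * Real.exp (μ * m / d)) k
        = Real.exp ((μ * m / d) * ((∑ i, k i : ℕ) : ℝ)) *
          (A ^ (∑ i, k i) / ∏ i, (Nat.factorial (k i) : ℝ)) := by
      unfold maj2
      rw [Finset.prod_div_distrib, Finset.prod_pow_eq_pow_sum, mul_pow,
        ← Real.exp_nat_mul, mul_comm ((∑ i, k i : ℕ) : ℝ) (μ * m / d)]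
      ring
    calc fnum (2*μ) A k
        ≤ ((-μ) * Real.exp 1)⁻¹ *
          (Real.exp (μ * P) * (A ^ (∑ i, k i) / ∏ i, (Nat.factorial (k i) : ℝ))) := key
      _ ≤ ((-μ) * Real.exp 1)⁻¹ *
          (Real.exp ((μ * m / d) * ((∑ i, k i : ℕ) : ℝ)) *
            (A ^ (∑ i, k i) / ∏ i, (Nat.factorial (k i) : ℝ))) := by
          apply mul_le_mul_of_nonneg_left _ hc
          apply mul_le_mul_of_nonneg_right _ hXnn
          exact_mod_cast hexple
      _ = ((-μ) * Real.exp 1)⁻¹ * maj2 (A * Real.exp (μ * m / d)) k := by rw [hmaj2eq]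
      _ ≤ _ := le_add_of_nonneg_right (mul_nonneg hc hsum1)
  · -- case 1 : moderately large coordinates except possibly `j`
    push_neg at hQm
    have hkj : k j ≤ P := by
      rw [hPQ]; exact Nat.le_mul_of_pos_right _ (by omega)
    have hexple : Real.exp (μ * P) ≤ Real.exp (μ * k j) := by
      apply Real.exp_le_exp.2
      have h5 : ((k j : ℕ) : ℝ) ≤ (P : ℝ) := by exact_mod_cast hkj
      nlinarith [mul_nonneg (neg_nonneg.2 hμ.le) (sub_nonneg.2 h5)]
    have hind : ∀ i ∈ Finset.univ.erase j,
        (if k i < m then A ^ (k i) / ((k i).factorial : ℝ) else 0)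
          = A ^ (k i) / ((k i).factorial : ℝ) := by
      intro i hi
      have hle : k i ≤ Q := Finset.single_le_prod' (fun i' _ => h0 i') hi
      rw [if_pos (by omega)]
    have hmaj1eq : maj1 A μ m j k
        = Real.exp (μ * k j) * (A ^ (∑ i, k i) / ∏ i, (Nat.factorial (k i) : ℝ)) := by
      unfold maj1
      rw [Finset.prod_congr rfl hind]
      have e1 : A ^ (∑ i, k i) = A ^ (k j) * ∏ i ∈ Finset.univ.erase j, A ^ (k i) := by
        rw [← Finset.prod_pow_eq_pow_sum]
        exact (Finset.mul_prod_erase _ _ (Finset.mem_univ j)).symm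
      have e2 : ∏ i, (Nat.factorial (k i) : ℝ)
          = ((k j).factorial : ℝ) * ∏ i ∈ Finset.univ.erase j, ((k i).factorial : ℝ) :=
        (Finset.mul_prod_erase _ _ (Finset.mem_univ j)).symm
      have e3 : (0:ℝ) < ∏ i ∈ Finset.univ.erase j, ((k i).factorial : ℝ) :=
        Finset.prod_pos fun i _ => by exact_mod_cast (k i).factorial_pos
      have e4 : (0:ℝ) < ((k j).factorial : ℝ) := by exact_mod_cast (k j).factorial_pos
      rw [e1, e2, Finset.prod_div_distrib, mul_pow, ← Real.exp_nat_mul,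
        mul_comm ((k j : ℕ) : ℝ) μ]
      field_simp
    calc fnum (2*μ) A k
        ≤ ((-μ) * Real.exp 1)⁻¹ *
          (Real.exp (μ * P) * (A ^ (∑ i, k i) / ∏ i, (Nat.factorial (k i) : ℝ))) := key
      _ ≤ ((-μ) * Real.exp 1)⁻¹ *
          (Real.exp (μ * k j) * (A ^ (∑ i, k i) / ∏ i, (Nat.factorial (k i) : ℝ))) := by
          apply mul_le_mul_of_nonneg_left _ hc
          exact mul_le_mul_of_nonneg_right hexple hXnn
      _ = ((-μ) * Real.exp 1)⁻¹ * maj1 A μ m j k := by rw [hmaj1eq]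
      _ ≤ ((-μ) * Real.exp 1)⁻¹ * ∑ j', maj1 A μ m j' k := by
          apply mul_le_mul_of_nonneg_left _ hc
          exact Finset.single_le_sum (fun j' _ => hmaj1 j') (Finset.mem_univ j)
      _ ≤ _ := le_add_of_nonneg_left (mul_nonneg hc hmaj2)


lemma tsum_maj2 {x : ℝ} (hx : 0 ≤ x) :
    Summable (maj2 (d := d) x) ∧
      ∑' k : Fin d → ℕ, maj2 x k = Real.exp (d * x) := by
  obtain ⟨hS, hT⟩ := pi_prod_sum (fun (_ : Fin d) n => x ^ n / n.factorial)
    (fun _ n => by positivity) (fun _ => Real.summable_pow_div_factorial x)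
  refine ⟨hS, ?_⟩
  calc ∑' k : Fin d → ℕ, maj2 x k = ∏ _i : Fin d, ∑' n : ℕ, x ^ n / n.factorial := hT
    _ = ∏ _i : Fin d, Real.exp x := Finset.prod_congr rfl fun i _ => tsum_exp_series x
    _ = Real.exp x ^ d := by rw [Finset.prod_const, Finset.card_univ, Fintype.card_fin]
    _ = Real.exp (d * x) := (Real.exp_nat_mul x d).symm

lemma tsum_maj1 {A μ : ℝ} (hA : 0 ≤ A) (hμ : μ ≤ 0) (m : ℕ) (j : Fin d) :
    Summable (maj1 (d := d) A μ m j) ∧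
      ∑' k : Fin d → ℕ, maj1 A μ m j k
        = Real.exp (A * Real.exp μ) *
            (∑ n ∈ Finset.range m, A ^ n / (n.factorial : ℝ)) ^ (d - 1) := by
  classical
  set g : Fin d → ℕ → ℝ := fun i n => if i = j then (A * Real.exp μ) ^ n / (n.factorial : ℝ)
    else (if n < m then A ^ n / (n.factorial : ℝ) else 0) with hg
  have h0 : ∀ i n, 0 ≤ g i n := by
    intro i n
    simp only [hg]
    split_ifs
    · positivity
    · positivity
    · exact le_refl 0
  have hsum : ∀ i, Summable (g i) := by
    intro i
    by_cases h : i = j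
    · simpa [hg, h] using Real.summable_pow_div_factorial (A * Real.exp μ)
    · apply summable_of_ne_finset_zero (s := Finset.range m)
      intro n hn
      simp [hg, h, (by simpa using hn : ¬ n < m)]
  obtain ⟨hS, hT⟩ := pi_prod_sum g h0 hsum
  have hfun : ∀ k : Fin d → ℕ, maj1 A μ m j k = ∏ i, g i (k i) := by
    intro k
    rw [← Finset.mul_prod_erase Finset.univ (fun i => g i (k i)) (Finset.mem_univ j)]
    unfold maj1
    congr 1
    · simp [hg]
    · exact Finset.prod_congr rfl fun i hi => by simp [hg, Finset.ne_of_mem_erase hi]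
  constructor
  · exact hS.congr fun k => (hfun k).symm
  · calc ∑' k : Fin d → ℕ, maj1 A μ m j k = ∑' k : Fin d → ℕ, ∏ i, g i (k i) :=
          tsum_congr hfun
      _ = ∏ i, ∑' n, g i n := hT
      _ = (∑' n, g j n) * ∏ i ∈ Finset.univ.erase j, ∑' n, g i n :=
          (Finset.mul_prod_erase Finset.univ (fun i => ∑' n, g i n) (Finset.mem_univ j)).symm
      _ = Real.exp (A * Real.exp μ) *
            (∑ n ∈ Finset.range m, A ^ n / (n.factorial : ℝ)) ^ (d - 1) := by
          congr 1
          · rw [show (∑' n, g j n) = ∑' n : ℕ, (A * Real.exp μ) ^ n / (n.factorial : ℝ) from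
              tsum_congr fun n => by simp [hg], tsum_exp_series]
          · have hTT : ∀ i ∈ Finset.univ.erase j,
                (∑' n, g i n) = ∑ n ∈ Finset.range m, A ^ n / (n.factorial : ℝ) := by
              intro i hi
              have hij := Finset.ne_of_mem_erase hi
              rw [show (∑' n, g i n)
                  = ∑' n : ℕ, (if n < m then A ^ n / (n.factorial : ℝ) else 0) from
                tsum_congr fun n => by simp [hg, hij]]
              rw [tsum_eq_sum (s := Finset.range m) (fun n hn => if_neg (by simpa using hn))]
              exact Finset.sum_congr rfl fun n hn => if_pos (Finset.mem_range.1 hn)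
            rw [Finset.prod_congr rfl hTT, Finset.prod_const,
              Finset.card_erase_of_mem (Finset.mem_univ j), Finset.card_univ, Fintype.card_fin]

lemma num_bound (hd : 2 ≤ d) {μ A : ℝ} (hμ : μ < 0) (hA : 1 ≤ A) {m : ℕ} (hm : 1 ≤ m) :
    ∑' k : Fin d → ℕ, fnum (2*μ) A k ≤
      ((-μ) * Real.exp 1)⁻¹ * Real.exp (d * (A * Real.exp (μ * m / d)))
        + ((-μ) * Real.exp 1)⁻¹ *
            (d * (Real.exp (A * Real.exp μ) * ((m : ℝ) * A ^ m) ^ (d - 1))) := by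
  have hA0 : (0:ℝ) ≤ A := le_trans zero_le_one hA
  have hc : (0:ℝ) ≤ ((-μ) * Real.exp 1)⁻¹ :=
    inv_nonneg.2 (mul_nonneg (neg_nonneg.2 hμ.le) (Real.exp_pos 1).le)
  have hx2 : (0:ℝ) ≤ A * Real.exp (μ * m / d) := by positivity
  obtain ⟨hS2, hT2⟩ := tsum_maj2 (d := d) hx2
  have hS1 : ∀ j : Fin d, Summable (maj1 (d := d) A μ m j) :=
    fun j => (tsum_maj1 hA0 hμ.le m j).1
  have hT1 : ∀ j : Fin d, ∑' k : Fin d → ℕ, maj1 A μ m j k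
      = Real.exp (A * Real.exp μ) *
          (∑ n ∈ Finset.range m, A ^ n / (n.factorial : ℝ)) ^ (d - 1) :=
    fun j => (tsum_maj1 hA0 hμ.le m j).2
  have hSsum : Summable (fun k : Fin d → ℕ => ∑ j, maj1 A μ m j k) :=
    summable_sum (fun j _ => hS1 j)
  have hfs : Summable (fnum (2*μ) A (d := d)) := summable_fnum (by linarith) hA0
  have hRHS : Summable (fun k : Fin d → ℕ =>
      ((-μ) * Real.exp 1)⁻¹ * maj2 (A * Real.exp (μ * m / d)) k
        + ((-μ) * Real.exp 1)⁻¹ * ∑ j, maj1 A μ m j k) :=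
    (hS2.mul_left _).add (hSsum.mul_left _)
  have hTnn : (0:ℝ) ≤ ∑ n ∈ Finset.range m, A ^ n / (n.factorial : ℝ) :=
    Finset.sum_nonneg fun n _ => by positivity
  have hTle : ∑ n ∈ Finset.range m, A ^ n / (n.factorial : ℝ) ≤ (m : ℝ) * A ^ m := by
    have := Finset.sum_le_card_nsmul (Finset.range m)
      (fun n => A ^ n / (n.factorial : ℝ)) (A ^ m) (fun n hn => ?_)
    · simpa [Finset.card_range, smul_eq_mul] using this
    · calc A ^ n / (n.factorial : ℝ) ≤ A ^ n / 1 := by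
            apply div_le_div_of_nonneg_left (pow_nonneg hA0 n) ?_ ?_
            · norm_num
            · exact_mod_cast n.factorial_pos
        _ = A ^ n := div_one _
        _ ≤ A ^ m := pow_le_pow_right₀ hA (le_of_lt (Finset.mem_range.1 hn))
  calc ∑' k : Fin d → ℕ, fnum (2*μ) A k
      ≤ ∑' k : Fin d → ℕ, (((-μ) * Real.exp 1)⁻¹ * maj2 (A * Real.exp (μ * m / d)) k
          + ((-μ) * Real.exp 1)⁻¹ * ∑ j, maj1 A μ m j k) :=
        Summable.tsum_le_tsum (pointwise hd hμ hA0 hm) hfs hRHS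
    _ = ((-μ) * Real.exp 1)⁻¹ * (∑' k : Fin d → ℕ, maj2 (A * Real.exp (μ * m / d)) k)
          + ((-μ) * Real.exp 1)⁻¹ * ∑' k : Fin d → ℕ, ∑ j, maj1 A μ m j k := by
        rw [Summable.tsum_add (hS2.mul_left _) (hSsum.mul_left _), tsum_mul_left, tsum_mul_left]
    _ = ((-μ) * Real.exp 1)⁻¹ * Real.exp (d * (A * Real.exp (μ * m / d)))
          + ((-μ) * Real.exp 1)⁻¹ *
            (d * (Real.exp (A * Real.exp μ) *
              (∑ n ∈ Finset.range m, A ^ n / (n.factorial : ℝ)) ^ (d - 1))) := by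
        rw [hT2, Summable.tsum_finsetSum (fun j _ => hS1 j)]
        congr 1
        rw [Finset.sum_congr rfl (fun j _ => hT1 j), Finset.sum_const, Finset.card_univ,
          Fintype.card_fin, nsmul_eq_mul]
    _ ≤ _ := by
        apply add_le_add le_rfl
        apply mul_le_mul_of_nonneg_left _ hc
        apply mul_le_mul_of_nonneg_left _ (Nat.cast_nonneg d)
        apply mul_le_mul_of_nonneg_left _ (Real.exp_pos _).le
        exact pow_le_pow_left₀ hTnn hTle _


/-- The final dominating function, as a function of `A`. -/
def Gfun (d : ℕ) (μ : ℝ) (A : ℝ) : ℝ :=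
  ((-μ) * Real.exp 1)⁻¹ * Real.exp (d * (A * Real.exp (μ * Real.sqrt A / d))) / Real.exp A
    + ((-μ) * Real.exp 1)⁻¹ * ((d : ℝ) * (Real.exp (A * Real.exp μ) *
        ((Real.sqrt A + 1) * A ^ (Real.sqrt A + 1 : ℝ)) ^ (d - 1))) / Real.exp A

lemma tendsto_sqrt_atTop : Tendsto Real.sqrt atTop atTop :=
  (tendsto_rpow_atTop (by norm_num : (0:ℝ) < 1/2)).congr
    fun x => (Real.sqrt_eq_rpow x).symm

lemma tendsto_G (d : ℕ) (hd : 2 ≤ d) {μ : ℝ} (hμ : μ < 0) :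
    Tendsto (Gfun d μ) atTop (nhds 0) := by
  have hd0' : (0:ℝ) < d := by exact_mod_cast (by omega : 0 < d)
  set c := ((-μ) * Real.exp 1)⁻¹ with hcdef
  -- first piece
  have hpoly : Tendsto (fun t : ℝ => t ^ 2 * Real.exp (μ / d * t)) atTop (nhds 0) := by
    have c0 : (0:ℝ) < -(μ / d) := by
      rw [neg_pos]
      exact div_neg_of_neg_of_pos hμ hd0'
    have h1 := tendsto_pow_mul_exp_neg_atTop_nhds_zero 2
    have h2 : Tendsto (fun t : ℝ => -(μ / d) * t) atTop atTop :=
      tendsto_id.const_mul_atTop c0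
    have h3 := h1.comp h2
    have h4 := h3.const_mul ((-(μ / d)) ^ 2)⁻¹
    rw [mul_zero] at h4
    refine Tendsto.congr (fun t => ?_) h4
    show ((-(μ / d)) ^ 2)⁻¹ * ((-(μ / d) * t) ^ 2 * Real.exp (-(-(μ / d) * t)))
        = t ^ 2 * Real.exp (μ / d * t)
    rw [show -(-(μ / d) * t) = μ / d * t by ring]
    have hne : -(μ / d) ≠ 0 := ne_of_gt c0
    calc ((-(μ / d)) ^ 2)⁻¹ * ((-(μ / d) * t) ^ 2 * Real.exp (μ / d * t))
        = ((-(μ / d)) ^ 2)⁻¹ * ((-(μ / d)) ^ 2) * (t ^ 2 * Real.exp (μ / d * t)) := by ring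
      _ = t ^ 2 * Real.exp (μ / d * t) := by
          rw [inv_mul_cancel₀ (pow_ne_zero 2 hne), one_mul]
  have hcomp := hpoly.comp tendsto_sqrt_atTop
  have h₀ : Tendsto (fun A : ℝ => (d:ℝ) * (A * Real.exp (μ * Real.sqrt A / d)))
      atTop (nhds 0) := by
    have h5 := hcomp.const_mul (d:ℝ)
    rw [mul_zero] at h5
    apply Tendsto.congr' _ h5
    filter_upwards [eventually_ge_atTop (0:ℝ)] with A hA
    show (d:ℝ) * ((Real.sqrt A) ^ 2 * Real.exp (μ / d * Real.sqrt A)) = _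
    rw [Real.sq_sqrt hA, show μ * Real.sqrt A / d = μ / d * Real.sqrt A by ring]
  have he₁ : Tendsto (fun A : ℝ => (d:ℝ) * (A * Real.exp (μ * Real.sqrt A / d)) - A)
      atTop atBot := by
    apply Tendsto.congr (fun A => (sub_eq_add_neg _ _).symm)
    exact h₀.add_atBot tendsto_neg_atTop_atBot
  have hT1 : Tendsto (fun A : ℝ =>
      c * Real.exp ((d:ℝ) * (A * Real.exp (μ * Real.sqrt A / d))) / Real.exp A)
      atTop (nhds 0) := by
    have h6 := (Real.tendsto_exp_atBot.comp he₁).const_mul c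
    rw [mul_zero] at h6
    apply Tendsto.congr (fun A => ?_) h6
    show c * Real.exp ((d:ℝ) * (A * Real.exp (μ * Real.sqrt A / d)) - A) = _
    rw [Real.exp_sub]
    ring
  -- second piece
  have p1 : Tendsto (fun A : ℝ => Real.log (Real.sqrt A + 1) / A) atTop (nhds 0) := by
    have hup : Tendsto (fun A : ℝ => Real.sqrt A / A) atTop (nhds 0) := by
      have h7 := tendsto_sqrt_atTop.inv_tendsto_atTop
      apply Tendsto.congr' _ h7
      filter_upwards [eventually_gt_atTop (0:ℝ)] with A hA
      show (Real.sqrt A)⁻¹ = Real.sqrt A / A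
      rw [inv_eq_one_div, div_eq_div_iff (Real.sqrt_pos.2 hA).ne' hA.ne', one_mul]
      exact (Real.mul_self_sqrt hA.le).symm
    apply squeeze_zero' _ _ hup
    · filter_upwards [eventually_ge_atTop (1:ℝ)] with A hA
      have h1 : (1:ℝ) ≤ Real.sqrt A + 1 := by
        have := Real.sqrt_nonneg A; linarith
      exact div_nonneg (Real.log_nonneg h1) (by linarith)
    · filter_upwards [eventually_ge_atTop (1:ℝ)] with A hA
      have hpos : (0:ℝ) < A := by linarith
      have hlog : Real.log (Real.sqrt A + 1) ≤ Real.sqrt A := by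
        have := Real.log_le_sub_one_of_pos
          (show (0:ℝ) < Real.sqrt A + 1 by positivity)
        linarith
      gcongr
  have p2 : Tendsto (fun A : ℝ => Real.log A * (Real.sqrt A + 1) / A) atTop (nhds 0) := by
    have hlog : Tendsto (fun A : ℝ => Real.log A / Real.sqrt A) atTop (nhds 0) := by
      have h8 := (isLittleO_log_rpow_atTop (by norm_num : (0:ℝ) < 1/2)).tendsto_div_nhds_zero
      exact h8.congr fun A => by rw [← Real.sqrt_eq_rpow]
    have h9 := hlog.const_mul (2:ℝ)
    rw [mul_zero] at h9
    apply squeeze_zero' _ _ h9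
    · filter_upwards [eventually_ge_atTop (1:ℝ)] with A hA
      have hpos : (0:ℝ) < A := by linarith
      exact div_nonneg (mul_nonneg (Real.log_nonneg hA) (by positivity)) hpos.le
    · filter_upwards [eventually_ge_atTop (1:ℝ)] with A hA
      have hpos : (0:ℝ) < A := by linarith
      have hsqpos : (0:ℝ) < Real.sqrt A := Real.sqrt_pos.2 hpos
      have h1le : (1:ℝ) ≤ Real.sqrt A := by
        rw [← Real.sqrt_one]; exact Real.sqrt_le_sqrt hA
      have hss : Real.sqrt A * Real.sqrt A = A := Real.mul_self_sqrt hpos.le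
      have hlogn : (0:ℝ) ≤ Real.log A := Real.log_nonneg hA
      rw [show (2:ℝ) * (Real.log A / Real.sqrt A) = 2 * Real.log A / Real.sqrt A by ring,
        div_le_div_iff₀ hpos hsqpos]
      have hsA : Real.sqrt A ≤ A := by nlinarith
      nlinarith
  have hbr : Tendsto (fun A : ℝ =>
      (Real.log (Real.sqrt A + 1) + Real.log A * (Real.sqrt A + 1)) / A) atTop (nhds 0) := by
    have h10 := p1.add p2
    rw [add_zero] at h10
    exact h10.congr fun A => (add_div _ _ _).symm
  have hneg : Real.exp μ - 1 < 0 := by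
    have : Real.exp μ < 1 := by
      rw [← Real.exp_zero]; exact Real.exp_lt_exp.2 hμ
    linarith
  have hlim : Tendsto (fun A : ℝ => (Real.exp μ - 1) + ((d - 1 : ℕ) : ℝ) *
      ((Real.log (Real.sqrt A + 1) + Real.log A * (Real.sqrt A + 1)) / A))
      atTop (nhds (Real.exp μ - 1)) := by
    have h11 := hbr.const_mul ((d - 1 : ℕ) : ℝ)
    rw [mul_zero] at h11
    have h12 := tendsto_const_nhds (x := Real.exp μ - 1) (f := atTop (α := ℝ)) |>.add h11
    rwa [add_zero] at h12
  have he₂ : Tendsto (fun A : ℝ => A * Real.exp μ + ((d - 1 : ℕ) : ℝ) *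
      (Real.log (Real.sqrt A + 1) + Real.log A * (Real.sqrt A + 1)) - A) atTop atBot := by
    have h13 := Tendsto.atTop_mul_neg hneg tendsto_id hlim
    apply Tendsto.congr' _ h13
    filter_upwards [eventually_gt_atTop (0:ℝ)] with A hA
    have hAne : A ≠ 0 := ne_of_gt hA
    field_simp
    simp only [id]
    ring
  have hT2 : Tendsto (fun A : ℝ =>
      c * ((d : ℝ) * (Real.exp (A * Real.exp μ) *
        ((Real.sqrt A + 1) * A ^ (Real.sqrt A + 1 : ℝ)) ^ (d - 1))) / Real.exp A)
      atTop (nhds 0) := by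
    have h14 := (Real.tendsto_exp_atBot.comp he₂).const_mul (c * d)
    rw [mul_zero] at h14
    apply Tendsto.congr' _ h14
    filter_upwards [eventually_gt_atTop (1:ℝ)] with A hA1
    have hA : (0:ℝ) < A := by linarith
    have hsq1 : (0:ℝ) < Real.sqrt A + 1 := by positivity
    have hpow : ((Real.sqrt A + 1) * A ^ (Real.sqrt A + 1 : ℝ)) ^ (d - 1)
        = Real.exp (((d - 1 : ℕ) : ℝ) *
            (Real.log (Real.sqrt A + 1) + Real.log A * (Real.sqrt A + 1))) := by
      rw [Real.rpow_def_of_pos hA, ← Real.exp_log hsq1, ← Real.exp_add, ← Real.exp_nat_mul,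
        Real.exp_log hsq1]
    simp only [Function.comp_apply]
    rw [hpow, Real.exp_sub, Real.exp_add]
    ring
  have := hT1.add hT2
  rw [add_zero] at this
  exact this.congr fun A => rfl

end

end Stmt2Aux

open Filter

open Stmt2Aux

/-- Equation (pp): the expectation `E G_d(μ_a^{(d)}) = Σ_k (k₁⋯k_d)·π_a(k)`
converges for every `a > 0` and tends to `0` as `a → ∞`. -/
theorem stmt2 (d : ℕ) (hd : 2 ≤ d) (b ν : ℝ) (hb : 0 < b) (hν : ν < 0)
    (Z : ℝ → ℝ)
    (hZ : ∀ a, Z a = ∑' k : Fin d → ℕ,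
      ((a * b ^ d / d) ^ (∑ i, k i) / ∏ i, (Nat.factorial (k i) : ℝ))
        * Real.exp (ν * ∏ i, (k i : ℝ)))
    (π : ℝ → (Fin d → ℕ) → ℝ)
    (hπ : ∀ a k, π a k
      = ((a * b ^ d / d) ^ (∑ i, k i) / ∏ i, (Nat.factorial (k i) : ℝ))
          * Real.exp (ν * ∏ i, (k i : ℝ)) / Z a) :
    (∀ a > 0, Summable fun k : Fin d → ℕ => (∏ i, (k i : ℝ)) * π a k) ∧
    Tendsto (fun a : ℝ => ∑' k : Fin d → ℕ, (∏ i, (k i : ℝ)) * π a k)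
      atTop (nhds 0) := by
  have hd0 : 0 < d := by omega
  have hd0' : (0:ℝ) < d := by exact_mod_cast hd0
  have hbd : (0:ℝ) < b ^ d / d := div_pos (pow_pos hb d) hd0'
  set μ := ν / 2 with hμdef
  have hμ : μ < 0 := by rw [hμdef]; linarith
  have hν2 : ν = 2 * μ := by rw [hμdef]; ring
  have hπf : ∀ a, (fun k : Fin d → ℕ => (∏ i, (k i : ℝ)) * π a k)
      = fun k => fnum ν (a * b ^ d / d) k * (Z a)⁻¹ := by
    intro a
    funext k
    rw [hπ a k]
    simp only [fnum, term, div_eq_mul_inv]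
    ring
  have hZs : ∀ a, Z a = ∑' k : Fin d → ℕ, term ν (a * b ^ d / d) k := fun a => hZ a
  constructor
  · intro a ha
    have hA0 : (0:ℝ) ≤ a * b ^ d / d := by positivity
    rw [hπf a]
    exact (summable_fnum hν hA0).mul_right _
  · have hAtend : Tendsto (fun a : ℝ => a * b ^ d / d) atTop atTop := by
      have h := (tendsto_id (α := ℝ)).atTop_mul_const hbd
      exact h.congr fun a => by show a * (b ^ d / d) = _; ring
    have hG := (tendsto_G d hd hμ).comp hAtend
    apply tendsto_of_tendsto_of_tendsto_of_le_of_le'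
      (tendsto_const_nhds (x := (0:ℝ))) hG
    · -- nonnegativity
      filter_upwards [hAtend.eventually_ge_atTop 1] with a hA1
      have hA0 : (0:ℝ) ≤ a * b ^ d / d := by linarith
      have hZ1 : (1:ℝ) ≤ Z a := by rw [hZs a]; exact one_le_Z hd hν.le hA0
      apply tsum_nonneg
      intro k
      apply mul_nonneg (Finset.prod_nonneg fun i _ => Nat.cast_nonneg _)
      rw [hπ a k]
      apply div_nonneg _ (by linarith)
      exact mul_nonneg (div_nonneg (pow_nonneg hA0 _) (factProd_pos k).le)
        (Real.exp_pos _).le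
    · -- upper bound
      filter_upwards [hAtend.eventually_ge_atTop 1] with a hA1
      set A := a * b ^ d / d with hAdef
      have hA0 : (0:ℝ) ≤ A := by linarith
      have hApos : (0:ℝ) < A := by linarith
      have hZexp : Real.exp A ≤ Z a := by rw [hZs a]; exact exp_le_Z hd hν.le hA0
      set c := ((-μ) * Real.exp 1)⁻¹ with hcdef
      have hc : (0:ℝ) ≤ c :=
        inv_nonneg.2 (mul_nonneg (neg_nonneg.2 hμ.le) (Real.exp_pos 1).le)
      set m : ℕ := ⌈Real.sqrt A⌉₊ with hmdef
      have hm : 1 ≤ m := by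
        rw [hmdef]
        exact Nat.one_le_iff_ne_zero.2 (by
          simp only [ne_eq, Nat.ceil_eq_zero, not_le]
          exact Real.sqrt_pos.2 hApos)
      have hmge : Real.sqrt A ≤ (m : ℝ) := Nat.le_ceil _
      have hmle : (m : ℝ) ≤ Real.sqrt A + 1 := (Nat.ceil_lt_add_one (Real.sqrt_nonneg A)).le
      have hnum : ∑' k : Fin d → ℕ, fnum ν A k ≤
          c * Real.exp (d * (A * Real.exp (μ * m / d)))
            + c * (d * (Real.exp (A * Real.exp μ) * ((m : ℝ) * A ^ m) ^ (d - 1))) := by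
        rw [hν2]
        exact num_bound hd hμ hA1 hm
      have hrep1 : Real.exp ((d:ℝ) * (A * Real.exp (μ * m / d)))
          ≤ Real.exp ((d:ℝ) * (A * Real.exp (μ * Real.sqrt A / d))) := by
        apply Real.exp_le_exp.2
        apply mul_le_mul_of_nonneg_left _ hd0'.le
        apply mul_le_mul_of_nonneg_left _ hA0
        apply Real.exp_le_exp.2
        apply div_le_div_of_nonneg_right ?_ hd0'.le
        exact mul_le_mul_of_nonpos_left hmge hμ.le
      have hrep2 : ((m : ℝ) * A ^ m) ^ (d - 1)
          ≤ ((Real.sqrt A + 1) * A ^ (Real.sqrt A + 1 : ℝ)) ^ (d - 1) := by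
        apply pow_le_pow_left₀ (mul_nonneg (Nat.cast_nonneg m) (pow_nonneg hA0 m))
        apply mul_le_mul hmle _ (pow_nonneg hA0 m) (by positivity)
        rw [← Real.rpow_natCast A m]
        exact Real.rpow_le_rpow_of_exponent_le hA1 hmle
      have hGval : (Gfun d μ ∘ fun a' : ℝ => a' * b ^ d / d) a
          = (c * Real.exp ((d:ℝ) * (A * Real.exp (μ * Real.sqrt A / d)))
              + c * ((d:ℝ) * (Real.exp (A * Real.exp μ) *
                  ((Real.sqrt A + 1) * A ^ (Real.sqrt A + 1 : ℝ)) ^ (d - 1)))) / Real.exp A := by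
        show Gfun d μ (a * b ^ d / d) = _
        rw [← hAdef]
        unfold Gfun
        rw [← hcdef, add_div]
      rw [hGval]
      calc ∑' k : Fin d → ℕ, (∏ i, ((k i : ℕ) : ℝ)) * π a k
          = (∑' k : Fin d → ℕ, fnum ν A k) * (Z a)⁻¹ := by rw [hπf a, tsum_mul_right, hAdef]
        _ = (∑' k : Fin d → ℕ, fnum ν A k) / Z a := (div_eq_mul_inv _ _).symm
        _ ≤ (c * Real.exp ((d:ℝ) * (A * Real.exp (μ * Real.sqrt A / d)))
              + c * ((d:ℝ) * (Real.exp (A * Real.exp μ) *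
                  ((Real.sqrt A + 1) * A ^ (Real.sqrt A + 1 : ℝ)) ^ (d - 1)))) / Real.exp A := by
            apply div_le_div₀ _ _ (Real.exp_pos A) hZexp
            · apply add_nonneg (mul_nonneg hc (Real.exp_pos _).le)
              apply mul_nonneg hc
              apply mul_nonneg hd0'.le
              apply mul_nonneg (Real.exp_pos _).le
              apply pow_nonneg
              exact mul_nonneg (by positivity) (Real.rpow_nonneg hA0 _)
            · refine hnum.trans (add_le_add ?_ ?_)
              · exact mul_le_mul_of_nonneg_left hrep1 hc
              · apply mul_le_mul_of_nonneg_left _ hc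
                apply mul_le_mul_of_nonneg_left _ hd0'.le
                exact mul_le_mul_of_nonneg_left hrep2 (Real.exp_pos _).le
end

section
/- Fix an integer d ≥ 1 and a real b > 0. Let X be a finite set of pairwise distinct facets whose centers lie in [0,b]^d, and assume X is in general position: any two distinct facets of X with the same orientation l have different l-th center coordinates. For i = 1,…,d let θ_i(X) be the number of facets in X with orientation i. Then Σ over d-element subsets {x₁,…,x_d} of X of ℍ⁰(x₁ ∩ ⋯ ∩ x_d) = θ₁(X)·θ₂(X)⋯θ_d(X). -/
open MeasureTheory

/-- A facet with centre `z ∈ [0,b]^d` and orientation `l` (orientations are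
indexed by `Fin d`). -/
def facet (d : ℕ) (b : ℝ) (z : EuclideanSpace ℝ (Fin d)) (l : Fin d) :
    Set (EuclideanSpace ℝ (Fin d)) :=
  {x | x l = z l ∧ ∀ i, i ≠ l → |x i - z i| ≤ b}

/-- If `S` has `d` elements and distinct elements have distinct orientations,
then each orientation is attained by a unique element of `S`. -/
lemma exists_unique_orient {d : ℕ} {α : Type*} (S : Finset (α × Fin d))
    (hcard : S.card = d) (hinj : ∀ p ∈ S, ∀ q ∈ S, p.2 = q.2 → p = q)
    (i : Fin d) : ∃! p, p ∈ S ∧ p.2 = i := by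
  classical
  have himg : S.image Prod.snd = Finset.univ := by
    apply Finset.eq_univ_of_card
    rw [Finset.card_image_of_injOn fun p hp q hq h => hinj p hp q hq h, hcard,
      Fintype.card_fin]
  have : i ∈ S.image Prod.snd := himg ▸ Finset.mem_univ i
  obtain ⟨p, hp, hpi⟩ := Finset.mem_image.mp this
  exact ⟨p, ⟨hp, hpi⟩, fun q ⟨hq, hqi⟩ => hinj q hq p hp (by rw [hqi, hpi])⟩

/-- Equation (kack): the `U`-statistic `G_d` equals the product of the
orientation counts. -/
theorem stmt3 (d : ℕ) (hd : 1 ≤ d) (b : ℝ) (hb : 0 < b)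
    (X : Finset ((EuclideanSpace ℝ (Fin d)) × Fin d))
    (hcen : ∀ p ∈ X, ∀ i, p.1 i ∈ Set.Icc (0 : ℝ) b)
    (hgen : ∀ p ∈ X, ∀ q ∈ X, p ≠ q → p.2 = q.2 → p.1 p.2 ≠ q.1 q.2) :
    ∑ S ∈ X.powersetCard d, μH[0] (⋂ p ∈ S, facet d b p.1 p.2)
      = ∏ i : Fin d, ((X.filter fun p => p.2 = i).card : ENNReal) := by
  classical
  have key : ∀ S ∈ X.powersetCard d,
      μH[0] (⋂ p ∈ S, facet d b p.1 p.2)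
        = if (∀ p ∈ S, ∀ q ∈ S, p.2 = q.2 → p = q) then 1 else 0 := by
    intro S hS
    rw [Finset.mem_powersetCard] at hS
    obtain ⟨hSX, hcard⟩ := hS
    by_cases hinj : ∀ p ∈ S, ∀ q ∈ S, p.2 = q.2 → p = q
    · rw [if_pos hinj]
      have hexu := exists_unique_orient S hcard hinj
      set g : Fin d → (EuclideanSpace ℝ (Fin d)) × Fin d :=
        fun i => S.choose (fun p => p.2 = i) (by simpa using hexu i) with hg
      have hgS : ∀ i, g i ∈ S := fun i => S.choose_mem _ _
      have hgo : ∀ i, (g i).2 = i := fun i => S.choose_property (fun p => p.2 = i) _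
      set x : EuclideanSpace ℝ (Fin d) := WithLp.toLp 2 (fun i => (g i).1 i : ∀ _ : Fin d, ℝ) with hx
      have hsingle : (⋂ p ∈ S, facet d b p.1 p.2) = {x} := by
        ext y
        simp only [Set.mem_iInter, Set.mem_singleton_iff]
        constructor
        · intro hy
          ext i
          have := (hy (g i) (hgS i)).1
          rwa [hgo i] at this
        · rintro rfl p hp
          have hpg : p = g p.2 := (hexu p.2).unique ⟨hp, rfl⟩ ⟨hgS p.2, hgo p.2⟩
          constructor
          · show (g p.2).1 p.2 = p.1 p.2
            rw [← hpg]
          · intro i hi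
            show |(g i).1 i - p.1 i| ≤ b
            have h1 := hcen (g i) (hSX (hgS i)) i
            have h2 := hcen p (hSX hp) i
            rw [abs_sub_le_iff]
            constructor <;> [skip; skip] <;>
              simp only [Set.mem_Icc] at h1 h2 <;> linarith
      rw [hsingle, Measure.hausdorffMeasure_zero_singleton]
    · rw [if_neg hinj]
      push_neg at hinj
      obtain ⟨p, hp, q, hq, hpq2, hpq⟩ := hinj
      have hempty : (⋂ r ∈ S, facet d b r.1 r.2) = ∅ := by
        ext y
        simp only [Set.mem_iInter, Set.mem_empty_iff_false, iff_false]
        intro hy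
        have h1 := (hy p hp).1
        have h2 := (hy q hq).1
        exact hgen p (hSX hp) q (hSX hq) hpq hpq2
          (by rw [← h1, hpq2, h2])
      rw [hempty, measure_empty]
  rw [Finset.sum_congr rfl key, Finset.sum_boole]
  norm_cast
  rw [← Fintype.card_piFinset]
  have hEU : ∀ S ∈ (X.powersetCard d).filter
      (fun S => ∀ p ∈ S, ∀ q ∈ S, p.2 = q.2 → p = q), ∀ i : Fin d,
      ∃! p, p ∈ S ∧ p.2 = i := by
    intro S hS i
    rw [Finset.mem_filter, Finset.mem_powersetCard] at hS
    exact exists_unique_orient S hS.1.2 hS.2 i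
  apply Finset.card_bij
    (fun S hS => fun i : Fin d => S.choose (fun p => p.2 = i) (hEU S hS i))
  · intro S hS
    rw [Fintype.mem_piFinset]
    intro i
    rw [Finset.mem_filter]
    refine ⟨?_, S.choose_property (fun p => p.2 = i) (hEU S hS i)⟩
    have hS' := hS
    rw [Finset.mem_filter, Finset.mem_powersetCard] at hS'
    exact hS'.1.1 (S.choose_mem (fun p => p.2 = i) (hEU S hS i))
  · intro S hS S' hS' h
    have key : ∀ T, ∀ hT : T ∈ (X.powersetCard d).filter
        (fun S => ∀ p ∈ S, ∀ q ∈ S, p.2 = q.2 → p = q), ∀ p ∈ T,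
        Eq p (T.choose (fun q => q.2 = p.2) (hEU T hT p.2)) := by
      intro T hT p hp
      exact (hEU T hT p.2).unique ⟨hp, rfl⟩
        ⟨T.choose_mem _ _, T.choose_property (fun q => q.2 = p.2) (hEU T hT p.2)⟩
    ext p
    constructor
    · intro hp
      have := key S hS p hp
      rw [this, congrFun h p.2]
      exact S'.choose_mem _ _
    · intro hp
      have := key S' hS' p hp
      rw [this, ← congrFun h p.2]
      exact S.choose_mem _ _
  · intro f hf
    rw [Fintype.mem_piFinset] at hf
    have hfo : ∀ i, (f i).2 = i := fun i => (Finset.mem_filter.mp (hf i)).2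
    have hfX : ∀ i, f i ∈ X := fun i => (Finset.mem_filter.mp (hf i)).1
    have hfinj : Function.Injective f := fun i j h => by
      rw [← hfo i, ← hfo j, h]
    set S : Finset _ := Finset.univ.image f with hSdef
    have hmemS : ∀ p, p ∈ S ↔ ∃ i, f i = p := by
      intro p
      simp [hSdef]
    have hS : S ∈ (X.powersetCard d).filter
        (fun S => ∀ p ∈ S, ∀ q ∈ S, p.2 = q.2 → p = q) := by
      rw [Finset.mem_filter, Finset.mem_powersetCard]
      refine ⟨⟨?_, ?_⟩, ?_⟩
      · intro p hp
        obtain ⟨i, rfl⟩ := (hmemS p).mp hp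
        exact hfX i
      · rw [hSdef, Finset.card_image_of_injective _ hfinj, Finset.card_univ,
          Fintype.card_fin]
      · intro p hp q hq hpq
        obtain ⟨i, rfl⟩ := (hmemS p).mp hp
        obtain ⟨j, rfl⟩ := (hmemS q).mp hq
        rw [hfo i, hfo j] at hpq
        rw [hpq]
    refine ⟨S, hS, ?_⟩
    funext i
    exact ((hEU S hS i).unique
      ⟨S.choose_mem _ _, S.choose_property (fun p => p.2 = i) (hEU S hS i)⟩
      ⟨(hmemS (f i)).mpr ⟨i, rfl⟩, hfo i⟩)
end

section
/- Fix an integer d ≥ 1 and a real b > 0. Let y₁,…,y_d be facets with centers in [0,b]^d whose orientations are pairwise distinct (hence realizing all d orientations). Then the intersection y₁ ∩ ⋯ ∩ y_d is a singleton; consequently ℍ⁰(y₁ ∩ ⋯ ∩ y_d) = 1. -/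
open MeasureTheory

/-- The case `c = d` of the bound (bnds): `d` facets with pairwise distinct
orientations intersect in a single point, so `ℍ⁰` of the intersection is `1`. -/
theorem stmt5 (d : ℕ) (hd : 1 ≤ d) (b : ℝ) (hb : 0 < b)
    (z : Fin d → EuclideanSpace ℝ (Fin d)) (l : Fin d → Fin d)
    (hcen : ∀ j i, z j i ∈ Set.Icc (0 : ℝ) b)
    (hinj : Function.Injective l) :
    (∃ x, ⋂ j, facet d b (z j) (l j) = {x}) ∧
    μH[0] (⋂ j, facet d b (z j) (l j)) = 1 := by
  have hbij : Function.Bijective l := Finite.injective_iff_bijective.mp hinj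
  set e := Equiv.ofBijective l hbij with he
  set x : EuclideanSpace ℝ (Fin d) := WithLp.toLp 2 (fun i => z (e.symm i) i) with hx
  have hkey : ⋂ j, facet d b (z j) (l j) = {x} := by
    ext y
    simp only [Set.mem_iInter, Set.mem_singleton_iff, facet, Set.mem_setOf_eq]
    constructor
    · intro h
      ext i
      have := (h (e.symm i)).1
      have hli : l (e.symm i) = i := e.apply_symm_apply i
      rw [hli] at this
      simpa [hx] using this
    · intro h j
      subst h
      constructor
      · have : e.symm (l j) = j := e.symm_apply_apply j
        simp [hx, this]
      · intro i hi
        have h1 := hcen (e.symm i) i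
        have h2 := hcen j i
        rw [abs_sub_le_iff]
        constructor <;> simp only [hx, PiLp.toLp_apply] <;> linarith [h1.1, h1.2, h2.1, h2.2]
  rw [hkey]
  exact ⟨⟨x, rfl⟩, Measure.hausdorffMeasure_zero_singleton x⟩
end

section
/- Fix integers d ≥ 2, 2 ≤ c ≤ d and m ≥ 1, and reals b > 0, R > 0, S > 0 and a > 0. Let Y = [0,b]^d × {1,…,d} and let λ be the measure on Y given by λ(dz,{i}) = (1/d)·dz (Lebesgue measure on [0,b]^d times the uniform weight 1/d on each orientation). Let g : Y^m → [0,∞) be λ^m-integrable and invariant under the diagonal action of the symmetric group S_d on Y^m, where a permutation σ acts on a point (z,i) ∈ Y by permuting the coordinates of the center z according to σ and replacing the orientation i by σ(i). Let ρ : Y^m → ℝ be measurable and suppose that for every u = (u₁,…,u_m) ∈ Y^m, |ρ(u) − C(d−k(u), d−c+1)/C(d, d−c+1)| < R·e^{−S·a}, where k(u) ∈ {1,…,d} is the number of distinct orientations appearing among u₁,…,u_m and C(n,k) is the binomial coefficient (0 when k > n). Then |∫_{Y^m} g·ρ dλ^m − ∫_{(Y_{c−1})^m} g dλ^m| ≤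 R·(∫_{Y^m} g dλ^m)·e^{−S·a}, where Y_{c−1} = [0,b]^d × {1,…,c−1} ⊆ Y. -/
open MeasureTheory
open Finset
variable {d : ℕ}

lemma aux_binom {d t k : ℕ} (hk : k ≤ d) (ht : t ≤ d) :
    t.choose k * d.choose (d - t) = d.choose k * (d - k).choose (d - t) := by
  rcases le_or_gt k t with h | h
  · have h1 : d.choose (d - t) = d.choose t := Nat.choose_symm ht
    have h2 : (d - k).choose (d - t) = (d - k).choose (t - k) := by
      have h3 : d - t = (d - k) - (t - k) := by omega
      rw [h3, Nat.choose_symm (by omega)]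
    rw [h1, h2, mul_comm, Nat.choose_mul h]
  · rw [Nat.choose_eq_zero_of_lt h, Nat.choose_eq_zero_of_lt (show d - k < d - t by omega)]
    simp

lemma aux_card_perm_congr (T : Finset (Fin d)) {K K' : Finset (Fin d)}
    (h : K'.card = K.card) :
    (univ.filter fun σ : Equiv.Perm (Fin d) => ∀ x ∈ K, σ x ∈ T).card
      = (univ.filter fun σ : Equiv.Perm (Fin d) => ∀ x ∈ K', σ x ∈ T).card := by
  classical
  have hcard : Fintype.card {x // x ∈ K'} = Fintype.card {x // x ∈ K} := by
    simpa using h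
  set e := Fintype.equivOfCardEq hcard with he
  set π : Equiv.Perm (Fin d) := e.extendSubtype with hπ
  have hmem : ∀ x, x ∈ K' → π x ∈ K := fun x hx => e.extendSubtype_mem x hx
  have hnmem : ∀ x, x ∉ K' → π x ∉ K := fun x hx => e.extendSubtype_not_mem x hx
  have key : ∀ σ : Equiv.Perm (Fin d),
      (∀ x ∈ K, σ x ∈ T) ↔ (∀ x ∈ K', (σ * π) x ∈ T) := by
    intro σ
    constructor
    · intro hσ x hx
      exact hσ _ (hmem x hx)
    · intro hσ y hy
      have hy' : π.symm y ∈ K' := by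
        by_contra hc
        exact hnmem _ hc (by simpa using hy)
      simpa using hσ _ hy'
  refine Finset.card_bij' (fun σ _ => σ * π) (fun σ _ => σ * π⁻¹) ?_ ?_ ?_ ?_
  · intro σ hσ
    simp only [mem_filter, mem_univ, true_and] at hσ ⊢
    exact (key σ).mp hσ
  · intro σ hσ
    simp only [mem_filter, mem_univ, true_and] at hσ ⊢
    intro x hx
    have := (key (σ * π⁻¹)).mpr
    apply this
    · intro y hy
      simpa using hσ y hy
    · exact hx
  · intro σ _; group
  · intro σ _; group

lemma aux_sum_count (T : Finset (Fin d)) (k : ℕ) :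
    ∑ K ∈ powersetCard k (univ : Finset (Fin d)),
      (univ.filter fun σ : Equiv.Perm (Fin d) => ∀ x ∈ K, σ x ∈ T).card
      = d.factorial * T.card.choose k := by
  classical
  simp_rw [Finset.card_filter]
  rw [Finset.sum_comm]
  have hterm : ∀ σ : Equiv.Perm (Fin d),
      (∑ K ∈ powersetCard k (univ : Finset (Fin d)), if (∀ x ∈ K, σ x ∈ T) then 1 else 0)
        = T.card.choose k := by
    intro σ
    rw [← Finset.card_filter]
    have h1 : (powersetCard k (univ : Finset (Fin d))).filter (fun K => ∀ x ∈ K, σ x ∈ T)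
        = powersetCard k (univ.filter fun x => σ x ∈ T) := by
      ext K
      simp only [mem_filter, mem_powersetCard, subset_univ, true_and, Finset.subset_iff,
        mem_filter, mem_univ]
      tauto
    rw [h1, Finset.card_powersetCard]
    congr 1
    refine Finset.card_bij (fun x _ => σ x) ?_ ?_ ?_
    · intro x hx; simpa using (Finset.mem_filter.mp hx).2
    · intro x _ y _ h; exact σ.injective h
    · intro y hy; exact ⟨σ.symm y, by simpa using hy, by simp⟩
  rw [Finset.sum_congr rfl (fun σ _ => hterm σ)]
  simp [Finset.card_univ, Fintype.card_perm, Fintype.card_fin]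

/-- The main counting identity. -/
lemma aux_count_eq (T : Finset (Fin d)) (K : Finset (Fin d)) :
    (univ.filter fun σ : Equiv.Perm (Fin d) => ∀ x ∈ K, σ x ∈ T).card
        * d.choose (d - T.card)
      = (d - K.card).choose (d - T.card) * d.factorial := by
  classical
  set k := K.card with hk
  set t := T.card with ht
  have hkd : k ≤ d := by
    simpa using Finset.card_le_card (Finset.subset_univ K)
  have htd : t ≤ d := by
    simpa using Finset.card_le_card (Finset.subset_univ T)
  set N := (univ.filter fun σ : Equiv.Perm (Fin d) => ∀ x ∈ K, σ x ∈ T).card with hN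
  have hsum : d.choose k * N = d.factorial * t.choose k := by
    rw [← aux_sum_count T k]
    rw [Finset.sum_congr rfl (fun K' hK' => aux_card_perm_congr T
      (hk.symm.trans ((Finset.mem_powersetCard.mp hK').2).symm))]
    rw [Finset.sum_const, Finset.card_powersetCard, Finset.card_univ, Fintype.card_fin,
      smul_eq_mul]
  have hpos : 0 < d.choose k := Nat.choose_pos hkd
  apply Nat.eq_of_mul_eq_mul_left hpos
  calc d.choose k * (N * d.choose (d - t))
      = (d.choose k * N) * d.choose (d - t) := by ring
    _ = d.factorial * (t.choose k * d.choose (d - t)) := by rw [hsum]; ring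
    _ = d.factorial * (d.choose k * (d - k).choose (d - t)) := by rw [aux_binom hkd htd]
    _ = d.choose k * ((d - k).choose (d - t) * d.factorial) := by ring

lemma aux_card_T {d t : ℕ} (h : t ≤ d) :
    ((univ : Finset (Fin d)).filter fun i : Fin d => (i : ℕ) < t).card = t := by
  classical
  refine Finset.card_eq_of_bijective (fun n hn => (⟨n, lt_of_lt_of_le hn h⟩ : Fin d)) ?_ ?_ ?_
  · intro a ha
    simp only [mem_filter, mem_univ, true_and] at ha
    exact ⟨(a : ℕ), ha, by simp⟩
  · intro i hi
    simp [hi]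
  · intro i j hi hj hij
    simpa [Fin.mk.injEq] using hij

lemma aux_pointwise {d c : ℕ} (hc2 : 1 ≤ c) (hcd : c ≤ d) (K : Finset (Fin d)) :
    ∑ σ : Equiv.Perm (Fin d), (if ∀ x ∈ K, ((σ x : ℕ) < c - 1) then (1:ℝ) else 0)
      = d.factorial * (((d - K.card).choose (d - c + 1) : ℝ) / (d.choose (d - c + 1) : ℝ)) := by
  classical
  set T := (univ : Finset (Fin d)).filter (fun i : Fin d => (i : ℕ) < c - 1) with hT
  have hTcard : T.card = c - 1 := aux_card_T (by omega)
  have hsum : (∑ σ : Equiv.Perm (Fin d), (if ∀ x ∈ K, ((σ x : ℕ) < c - 1) then (1:ℝ) else 0))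
      = ((univ.filter fun σ : Equiv.Perm (Fin d) => ∀ x ∈ K, σ x ∈ T).card : ℝ) := by
    rw [Finset.card_filter]
    push_cast
    refine Finset.sum_congr rfl fun σ _ => ?_
    congr 1
    · simp [hT]
  rw [hsum]
  have hdt : d - T.card = d - c + 1 := by rw [hTcard]; omega
  have hcount := aux_count_eq T K
  rw [hdt] at hcount
  have hpos : (0:ℝ) < (d.choose (d - c + 1) : ℝ) := by
    exact_mod_cast Nat.choose_pos (by omega)
  rw [mul_div_assoc', eq_div_iff (ne_of_gt hpos)]
  have h2 := congrArg (fun n : ℕ => (n : ℝ)) hcount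
  push_cast at h2
  linarith [h2]


/-- The measure `λ` on the facet space `Y = [0,b]^d × {1,…,d}` given by
`λ(dz,{i}) = (1/d)·dz`, with orientations indexed by `Fin d`. -/
noncomputable def facetSpaceMeasure (d : ℕ) (b : ℝ) : Measure ((Fin d → ℝ) × Fin d) :=
  ((volume : Measure (Fin d → ℝ)).restrict {z | ∀ i, z i ∈ Set.Icc (0 : ℝ) b}).prod
    ((d : ENNReal)⁻¹ • Measure.count)

/-- The product measure `λ^m` on `Y^m`. -/
noncomputable def facetSpaceMeasurePi (d : ℕ) (b : ℝ) (m : ℕ) :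
    Measure (Fin m → (Fin d → ℝ) × Fin d) :=
  Measure.pi fun _ => facetSpaceMeasure d b

instance facet_finite (d : ℕ) (b : ℝ) : IsFiniteMeasure (facetSpaceMeasure d b) := by
  have h1 : IsFiniteMeasure ((volume : Measure (Fin d → ℝ)).restrict
      {z | ∀ i, z i ∈ Set.Icc (0 : ℝ) b}) := by
    constructor
    rw [Measure.restrict_apply_univ]
    have h : {z : Fin d → ℝ | ∀ i, z i ∈ Set.Icc (0:ℝ) b}
        = Set.pi Set.univ fun _ => Set.Icc 0 b := by
      ext z; simp [Set.mem_pi, Set.mem_Icc, forall_and, Pi.le_def]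
    rw [h, volume_pi_pi]
    simp only [Real.volume_Icc, Finset.prod_const]
    exact ENNReal.pow_lt_top ENNReal.ofReal_lt_top
  have h2 : IsFiniteMeasure ((d : ENNReal)⁻¹ • (Measure.count : Measure (Fin d))) := by
    constructor
    simp only [Measure.smul_apply, smul_eq_mul]
    have hc : (Measure.count : Measure (Fin d)) Set.univ = (d : ENNReal) := by
      rw [Measure.count_apply_finite _ Set.finite_univ]
      simp
    rw [hc]
    rcases Nat.eq_zero_or_pos d with hd | hd
    · simp [hd]
    · have : ((d : ENNReal))⁻¹ * d = 1 := ENNReal.inv_mul_cancel (by exact_mod_cast hd.ne')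
        (by simp)
      rw [this]; exact ENNReal.one_lt_top
  unfold facetSpaceMeasure
  infer_instance

lemma aux_mp (d : ℕ) (b : ℝ) (σ : Equiv.Perm (Fin d)) :
    MeasurePreserving (fun y : (Fin d → ℝ) × Fin d => (y.1 ∘ σ.symm, σ y.2))
      (facetSpaceMeasure d b) (facetSpaceMeasure d b) := by
  have h1v : MeasurePreserving (fun z : Fin d → ℝ => z ∘ σ.symm) volume volume := by
    have h := volume_measurePreserving_piCongrLeft (fun _ : Fin d => ℝ) σ
    have hco : ⇑(MeasurableEquiv.piCongrLeft (fun _ : Fin d => ℝ) σ)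
        = fun z : Fin d → ℝ => z ∘ σ.symm := by
      funext z
      funext i
      have hi : i = σ (σ.symm i) := by simp
      conv_lhs => rw [hi]
      rw [MeasurableEquiv.piCongrLeft_apply_apply]
      rfl
    rwa [hco] at h
  have hcube : MeasurableSet {z : Fin d → ℝ | ∀ i, z i ∈ Set.Icc (0:ℝ) b} := by
    have : {z : Fin d → ℝ | ∀ i, z i ∈ Set.Icc (0:ℝ) b}
        = ⋂ i, (fun z : Fin d → ℝ => z i) ⁻¹' Set.Icc (0:ℝ) b := by
      ext z; simp
    rw [this]
    exact MeasurableSet.iInter fun i => (measurable_pi_apply i) measurableSet_Icc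
  have hpre : (fun z : Fin d → ℝ => z ∘ σ.symm) ⁻¹' {z | ∀ i, z i ∈ Set.Icc (0:ℝ) b}
      = {z | ∀ i, z i ∈ Set.Icc (0:ℝ) b} := by
    ext z
    constructor
    · intro h i
      have := h (σ i)
      simpa using this
    · intro h i
      exact h _
  have h1 : MeasurePreserving (fun z : Fin d → ℝ => z ∘ σ.symm)
      ((volume : Measure (Fin d → ℝ)).restrict {z | ∀ i, z i ∈ Set.Icc (0:ℝ) b})
      ((volume : Measure (Fin d → ℝ)).restrict {z | ∀ i, z i ∈ Set.Icc (0:ℝ) b}) := by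
    have := h1v.restrict_preimage (s := {z | ∀ i, z i ∈ Set.Icc (0:ℝ) b}) hcube
    rwa [hpre] at this
  have hmapcount : Measure.map (⇑σ) (Measure.count : Measure (Fin d)) = Measure.count := by
    refine Measure.ext fun s hs => ?_
    rw [Measure.map_apply (measurable_of_countable _) hs,
      Measure.count_apply_finite _ (Set.toFinite _), Measure.count_apply_finite _ (Set.toFinite _)]
    norm_cast
    refine Finset.card_bij (fun x _ => σ x) ?_ ?_ ?_
    · intro x hx
      rw [Set.Finite.mem_toFinset] at hx ⊢
      exact hx
    · intro x _ y _ h; exact σ.injective h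
    · intro y hy
      rw [Set.Finite.mem_toFinset] at hy
      exact ⟨σ.symm y, by rw [Set.Finite.mem_toFinset]; simpa using hy, by simp⟩
  have h2 : MeasurePreserving (⇑σ)
      ((d : ENNReal)⁻¹ • (Measure.count : Measure (Fin d)))
      ((d : ENNReal)⁻¹ • (Measure.count : Measure (Fin d))) := by
    refine ⟨measurable_of_countable _, ?_⟩
    rw [Measure.map_smul, hmapcount]
  exact h1.prod h2

lemma aux_mp_pi (d : ℕ) (b : ℝ) (m : ℕ) (σ : Equiv.Perm (Fin d)) :
    MeasurePreserving
      (fun (u : Fin m → (Fin d → ℝ) × Fin d) j =>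
        ((fun i => (u j).1 (σ.symm i), σ (u j).2) : (Fin d → ℝ) × Fin d))
      (facetSpaceMeasurePi d b m) (facetSpaceMeasurePi d b m) :=
  measurePreserving_pi _ _ (fun _ => aux_mp d b σ)


/-- **Lemma 2** of the paper, for a general symmetric nonnegative integrand `g`
and a general `ρ` satisfying the conclusion of Lemma 1. -/
theorem stmt10 (d c m : ℕ) (hd : 2 ≤ d) (hc2 : 2 ≤ c) (hcd : c ≤ d) (hm : 1 ≤ m)
    (b R S a : ℝ) (hb : 0 < b) (hR : 0 < R) (hS : 0 < S) (ha : 0 < a)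
    (g : (Fin m → (Fin d → ℝ) × Fin d) → ℝ)
    (hg0 : ∀ u, 0 ≤ g u)
    (hgint : Integrable g (facetSpaceMeasurePi d b m))
    (hsym : ∀ σ : Equiv.Perm (Fin d), ∀ u,
      g (fun j => (fun i => (u j).1 (σ.symm i), σ (u j).2)) = g u)
    (ρ : (Fin m → (Fin d → ℝ) × Fin d) → ℝ) (hρmeas : Measurable ρ)
    (hρ : ∀ u : Fin m → (Fin d → ℝ) × Fin d,
      |ρ u - (Nat.choose (d - (Finset.univ.image fun j => (u j).2).card) (d - c + 1) : ℝ)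
          / (Nat.choose d (d - c + 1) : ℝ)|
        < R * Real.exp (-S * a)) :
    |(∫ u, g u * ρ u ∂(facetSpaceMeasurePi d b m))
        - ∫ u in {u | ∀ j, ((u j).2 : ℕ) < c - 1}, g u ∂(facetSpaceMeasurePi d b m)|
      ≤ R * (∫ u, g u ∂(facetSpaceMeasurePi d b m)) * Real.exp (-S * a) := by
  classical
  set μ := facetSpaceMeasurePi d b m with hμ
  set r : (Fin m → (Fin d → ℝ) × Fin d) → ℝ := fun u =>
    ((d - ((Finset.univ.image fun j => (u j).2)).card).choose (d - c + 1) : ℝ)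
      / (d.choose (d - c + 1) : ℝ) with hr
  set A : Set (Fin m → (Fin d → ℝ) × Fin d) := {u | ∀ j, ((u j).2 : ℕ) < c - 1} with hA
  -- measurability facts
  have hsnd : ∀ j : Fin m, Measurable fun u : Fin m → (Fin d → ℝ) × Fin d => (u j).2 :=
    fun j => measurable_snd.comp (measurable_pi_apply j)
  have hAσmeas : ∀ σ : Equiv.Perm (Fin d),
      MeasurableSet {u : Fin m → (Fin d → ℝ) × Fin d | ∀ j, ((σ ((u j).2) : Fin d) : ℕ) < c - 1} := by
    intro σ
    have : {u : Fin m → (Fin d → ℝ) × Fin d | ∀ j, ((σ ((u j).2) : Fin d) : ℕ) < c - 1}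
        = ⋂ j, (fun u : Fin m → (Fin d → ℝ) × Fin d => (u j).2) ⁻¹'
            {i : Fin d | ((σ i : Fin d) : ℕ) < c - 1} := by
      ext u; simp
    rw [this]
    exact MeasurableSet.iInter fun j =>
      (hsnd j) ((Set.to_countable _).measurableSet)
  have hAmeas : MeasurableSet A := by
    have : A = ⋂ j, (fun u : Fin m → (Fin d → ℝ) × Fin d => (u j).2) ⁻¹'
        {i : Fin d | (i : ℕ) < c - 1} := by
      ext u; simp [hA]
    rw [this]
    exact MeasurableSet.iInter fun j =>
      (hsnd j) ((Set.to_countable _).measurableSet)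
  have hrmeas : Measurable r := by
    have h1 : Measurable fun u : Fin m → (Fin d → ℝ) × Fin d => fun j => (u j).2 :=
      measurable_pi_lambda _ hsnd
    exact (measurable_of_countable (fun v : Fin m → Fin d =>
      ((d - ((Finset.univ.image v)).card).choose (d - c + 1) : ℝ)
        / (d.choose (d - c + 1) : ℝ))).comp h1
  have hCpos : (0:ℝ) < (d.choose (d - c + 1) : ℝ) := by
    exact_mod_cast Nat.choose_pos (by omega)
  have hr01 : ∀ u, 0 ≤ r u ∧ r u ≤ 1 := by
    intro u
    constructor
    · exact div_nonneg (by positivity) (le_of_lt hCpos)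
    · rw [div_le_one hCpos]
      exact_mod_cast Nat.choose_le_choose _ (Nat.sub_le d _)
  -- integrability facts
  have hint_gr : Integrable (fun u => g u * r u) μ := by
    have : Integrable (fun u => r u * g u) μ :=
      hgint.bdd_mul (c := 1) hrmeas.aestronglyMeasurable
        (Filter.Eventually.of_forall fun u => by rw [Real.norm_eq_abs, abs_of_nonneg (hr01 u).1]; exact (hr01 u).2)
    exact this.congr (Filter.Eventually.of_forall fun u => mul_comm _ _)
  have hint_gρ : Integrable (fun u => g u * ρ u) μ := by
    have : Integrable (fun u => ρ u * g u) μ := by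
      refine hgint.bdd_mul (c := R * Real.exp (-S * a) + 1) hρmeas.aestronglyMeasurable
        (Filter.Eventually.of_forall fun u => ?_)
      rw [Real.norm_eq_abs]
      have h1 := (hρ u).le
      have h2 := hr01 u
      have : |ρ u| ≤ |ρ u - r u| + |r u| := by
        calc |ρ u| = |(ρ u - r u) + r u| := by ring_nf
          _ ≤ |ρ u - r u| + |r u| := abs_add_le _ _
      rw [abs_of_nonneg h2.1] at this
      linarith
    exact this.congr (Filter.Eventually.of_forall fun u => mul_comm _ _)
  -- the key identity: ∫ g r = ∫_A g
  have hkey : ∫ u, g u * r u ∂μ = ∫ u in A, g u ∂μ := by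
    -- change of variables for each σ
    have hchange : ∀ σ : Equiv.Perm (Fin d),
        ∫ u, Set.indicator {u : Fin m → (Fin d → ℝ) × Fin d |
            ∀ j, ((σ ((u j).2) : Fin d) : ℕ) < c - 1} g u ∂μ
          = ∫ u in A, g u ∂μ := by
      intro σ
      have hmp := aux_mp_pi d b m σ
      rw [← integral_indicator hAmeas]
      have hstep : ∫ u, Set.indicator A g u ∂μ
          = ∫ u, Set.indicator A g
              ((fun (u : Fin m → (Fin d → ℝ) × Fin d) j =>
                ((fun i => (u j).1 (σ.symm i), σ (u j).2) : (Fin d → ℝ) × Fin d)) u) ∂μ := by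
        rw [← hμ] at hmp
        conv_lhs => rw [← hmp.map_eq]
        rw [integral_map hmp.measurable.aemeasurable]
        rw [hmp.map_eq]
        exact (hgint.aestronglyMeasurable.indicator hAmeas)
      rw [hstep]
      refine integral_congr_ae (Filter.Eventually.of_forall fun u => ?_)
      simp only [Set.indicator_apply]
      have hmem : ((fun (u : Fin m → (Fin d → ℝ) × Fin d) j =>
            ((fun i => (u j).1 (σ.symm i), σ (u j).2) : (Fin d → ℝ) × Fin d)) u ∈ A)
          ↔ u ∈ {u : Fin m → (Fin d → ℝ) × Fin d | ∀ j, ((σ ((u j).2) : Fin d) : ℕ) < c - 1} := by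
        simp [hA]
      by_cases h : u ∈ {u : Fin m → (Fin d → ℝ) × Fin d | ∀ j, ((σ ((u j).2) : Fin d) : ℕ) < c - 1}
      · rw [if_pos (hmem.mpr h), if_pos h]
        exact (hsym σ u).symm
      · rw [if_neg (fun hc => h (hmem.mp hc)), if_neg h]
    -- pointwise sum identity
    have hpoint : ∀ u, (∑ σ : Equiv.Perm (Fin d),
        Set.indicator {u : Fin m → (Fin d → ℝ) × Fin d |
            ∀ j, ((σ ((u j).2) : Fin d) : ℕ) < c - 1} g u)
          = (d.factorial : ℝ) * (g u * r u) := by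
      intro u
      have h1 : ∀ σ : Equiv.Perm (Fin d),
          Set.indicator {u : Fin m → (Fin d → ℝ) × Fin d |
            ∀ j, ((σ ((u j).2) : Fin d) : ℕ) < c - 1} g u
          = g u * (if ∀ x ∈ (Finset.univ.image fun j => (u j).2), ((σ x : Fin d) : ℕ) < c - 1
              then (1:ℝ) else 0) := by
        intro σ
        rw [Set.indicator_apply]
        have hiff : (u ∈ {u : Fin m → (Fin d → ℝ) × Fin d |
            ∀ j, ((σ ((u j).2) : Fin d) : ℕ) < c - 1})
            ↔ (∀ x ∈ (Finset.univ.image fun j => (u j).2), ((σ x : Fin d) : ℕ) < c - 1) := by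
          simp only [Set.mem_setOf_eq, Finset.mem_image, Finset.mem_univ, true_and]
          constructor
          · rintro h x ⟨j, rfl⟩
            exact h j
          · intro h j
            exact h _ ⟨j, rfl⟩
        by_cases h : ∀ x ∈ (Finset.univ.image fun j => (u j).2), ((σ x : Fin d) : ℕ) < c - 1
        · rw [if_pos (hiff.mpr h), if_pos h, mul_one]
        · rw [if_neg (fun hc => h (hiff.mp hc)), if_neg h, mul_zero]
      rw [Finset.sum_congr rfl (fun σ _ => h1 σ), ← Finset.mul_sum]
      rw [aux_pointwise (by omega) hcd]
      rw [hr]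
      ring
    have hsum : ∫ u, (∑ σ : Equiv.Perm (Fin d),
        Set.indicator {u : Fin m → (Fin d → ℝ) × Fin d |
            ∀ j, ((σ ((u j).2) : Fin d) : ℕ) < c - 1} g u) ∂μ
        = (d.factorial : ℝ) * ∫ u in A, g u ∂μ := by
      rw [integral_finset_sum _ (fun σ _ => hgint.indicator (hAσmeas σ))]
      rw [Finset.sum_congr rfl (fun σ _ => hchange σ)]
      rw [Finset.sum_const, Finset.card_univ, Fintype.card_perm, Fintype.card_fin, nsmul_eq_mul]
    have hsum2 : ∫ u, (∑ σ : Equiv.Perm (Fin d),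
        Set.indicator {u : Fin m → (Fin d → ℝ) × Fin d |
            ∀ j, ((σ ((u j).2) : Fin d) : ℕ) < c - 1} g u) ∂μ
        = (d.factorial : ℝ) * ∫ u, g u * r u ∂μ := by
      rw [integral_congr_ae (Filter.Eventually.of_forall hpoint)]
      rw [integral_const_mul]
    have hfac : ((d.factorial : ℝ)) ≠ 0 := by
      exact_mod_cast (Nat.factorial_pos d).ne'
    have := hsum.symm.trans hsum2
    exact mul_left_cancel₀ hfac this.symm
  -- final estimate
  rw [← hkey]
  have hsub : (∫ u, g u * ρ u ∂μ) - (∫ u, g u * r u ∂μ)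
      = ∫ u, g u * (ρ u - r u) ∂μ := by
    rw [← integral_sub hint_gρ hint_gr]
    refine integral_congr_ae (Filter.Eventually.of_forall fun u => ?_)
    ring
  rw [hsub]
  have hint_diff : Integrable (fun u => g u * (ρ u - r u)) μ :=
    (hint_gρ.sub hint_gr).congr (Filter.Eventually.of_forall fun u => by simp; ring)
  have habs : |∫ u, g u * (ρ u - r u) ∂μ| ≤ ∫ u, |g u * (ρ u - r u)| ∂μ := by
    simpa only [Real.norm_eq_abs] using norm_integral_le_integral_norm (μ := μ) (fun u => g u * (ρ u - r u))
  refine le_trans habs ?_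
  have hmono : ∫ u, |g u * (ρ u - r u)| ∂μ ≤ ∫ u, g u * (R * Real.exp (-S * a)) ∂μ := by
    refine integral_mono hint_diff.abs (hgint.mul_const _) fun u => ?_
    rw [abs_mul, abs_of_nonneg (hg0 u)]
    exact mul_le_mul_of_nonneg_left (hρ u).le (hg0 u)
  refine le_trans hmono ?_
  rw [integral_mul_const]
  apply le_of_eq
  ring
end
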